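/- Let m, n₁, n₂, q be as in the two-Puiseux-pair setting (1 < n₁ < m, gcd(m,n₁)=1, n₂>1, q>0, gcd(q,n₂)=1). Define A₁ = { -(m+n₁+k)/(m n₁ n₂) : 0 ≤ k < m n₁ n₂, m ∤ (m+n₁+k), n₁ ∤ (m+n₁+k) } and A₂ = { -((m+n₁)n₂+q+k)/(n₂(m n₁ n₂+q)) : 0 ≤ k < n₂(m n₁ n₂+q), n₂ ∤ N_k, (m n₁ n₂+q) ∤ N_k } where N_k = (m+n₁)n₂+q+k. If gcd(q, n₁) = 1 or gcd(q, m) = 1, then A₁ and A₂ are disjoint. -/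

import Mathlib

/-- Under the coprimality hypothesis on `q`, the candidate sets `A₁` and `A₂` are
disjoint. -/
theorem stmt7 (n₁ m n₂ q : ℕ) (h1 : 1 < n₁) (h2 : n₁ < m) (hco : Nat.Coprime m n₁)
    (h3 : 1 < n₂) (hq : 0 < q) (hqn : Nat.Coprime q n₂)
    (hq' : Nat.Coprime q n₁ ∨ Nat.Coprime q m) :
    {x : ℚ | ∃ k : ℕ, k < m * n₁ * n₂ ∧ ¬ m ∣ (m + n₁ + k) ∧ ¬ n₁ ∣ (m + n₁ + k) ∧
        x = -(((m + n₁ + k : ℕ) : ℚ) / ((m * n₁ * n₂ : ℕ) : ℚ))} ∩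
    {x : ℚ | ∃ k : ℕ, k < n₂ * (m * n₁ * n₂ + q) ∧
        ¬ n₂ ∣ ((m + n₁) * n₂ + q + k) ∧ ¬ (m * n₁ * n₂ + q) ∣ ((m + n₁) * n₂ + q + k) ∧
        x = -((((m + n₁) * n₂ + q + k : ℕ) : ℚ) / ((n₂ * (m * n₁ * n₂ + q) : ℕ) : ℚ))} =
    ∅ := by
  ext x
  simp only [Set.mem_inter_iff, Set.mem_setOf_eq, Set.mem_empty_iff_false, iff_false, not_and]
  rintro ⟨k₁, hk₁, hm, hn, rfl⟩ ⟨k₂, hk₂, hn₂, hP, heq⟩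
  have hm0 : (0:ℕ) < m := by omega
  have hn₁0 : (0:ℕ) < n₁ := by omega
  have hn₂0 : (0:ℕ) < n₂ := by omega
  set A := m + n₁ + k₁ with hA
  set B := (m + n₁) * n₂ + q + k₂ with hB
  set P := m * n₁ * n₂ + q with hPdef
  have hd1 : ((m : ℚ) * n₁ * n₂) ≠ 0 := by positivity
  have hd2 : ((n₂ : ℚ) * (m * n₁ * n₂ + q)) ≠ 0 := by positivity
  have key : A * (n₂ * P) = B * (m * n₁ * n₂) := by
    have p1 : (0:ℚ) < ((m * n₁ * n₂ : ℕ) : ℚ) := by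
      exact_mod_cast Nat.mul_pos (Nat.mul_pos hm0 hn₁0) hn₂0
    have p2 : (0:ℚ) < ((n₂ * P : ℕ) : ℚ) := by
      have : 0 < n₂ * P := Nat.mul_pos hn₂0 (by omega)
      exact_mod_cast this
    rw [neg_inj, div_eq_div_iff p1.ne' p2.ne'] at heq
    exact_mod_cast heq
  have key2 : A * P = B * (m * n₁) := by
    have h : A * P * n₂ = B * (m * n₁) * n₂ := by rw [show A * P * n₂ = A * (n₂ * P) by ring, key]; ring
    exact Nat.eq_of_mul_eq_mul_right hn₂0 h
  rcases hq' with h | h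
  · -- coprime q n₁ : derive n₁ ∣ A
    have hcop : Nat.Coprime n₁ P := by
      have : Nat.Coprime n₁ (q + (m * n₂) * n₁) :=
        (Nat.coprime_add_mul_right_right n₁ q (m * n₂)).mpr h.symm
      have e : q + (m * n₂) * n₁ = P := by rw [hPdef]; ring
      rwa [e] at this
    have hdvd : n₁ ∣ A * P := key2 ▸ ⟨B * m, by ring⟩
    exact hn (hcop.dvd_of_dvd_mul_right hdvd)
  · have hcop : Nat.Coprime m P := by
      have : Nat.Coprime m (q + (n₁ * n₂) * m) :=
        (Nat.coprime_add_mul_right_right m q (n₁ * n₂)).mpr h.symm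
      have e : q + (n₁ * n₂) * m = P := by rw [hPdef]; ring
      rwa [e] at this
    have hdvd : m ∣ A * P := key2 ▸ ⟨B * n₁, by ring⟩
    exact hm (hcop.dvd_of_dvd_mul_right hdvd)
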